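/- arXiv:0906.1892 — 3 statements merged into one kernel-verified Lean document; each statement's English description precedes it below -/
import Mathlib

section
/- Let r ≥ 1. An r×r real symmetric matrix X is positive semidefinite if and only if there exist T ∈ T_r⁺ and ψ ∈ {0,1}^r such that X = T · diag(ψ) · Tᵀ, where diag(ψ) is the diagonal matrix with diagonal entries ψ_1,…,ψ_r. -/
open Matrix Finset Submodule InnerProductSpace

local notation "⟪" x ", " y "⟫" => @inner ℝ _ _ x y

private lemma inner_self_gramSchmidt' {E : Type*} [NormedAddCommGroup E]
    [InnerProductSpace ℝ E] {ι : Type*} [LinearOrder ι] [LocallyFiniteOrderBot ι]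
    [WellFoundedLT ι] (v : ι → E) (i : ι) :
    ⟪gramSchmidt ℝ v i, v i⟫ = ‖gramSchmidt ℝ v i‖ ^ 2 := by
  conv_lhs => rw [gramSchmidt_def'' ℝ v i]
  rw [inner_add_right, inner_sum, real_inner_self_eq_norm_sq]
  rw [Finset.sum_eq_zero, add_zero]
  intro k hk
  rw [real_inner_smul_right, gramSchmidt_orthogonal ℝ v (Finset.mem_Iio.1 hk).ne', mul_zero]

private lemma parseval_gs' {E : Type*} [NormedAddCommGroup E]
    [InnerProductSpace ℝ E] {ι : Type*} [LinearOrder ι] [LocallyFiniteOrderBot ι]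
    [WellFoundedLT ι] [Fintype ι] (v : ι → E) (j : ι) :
    v j = ∑ k, ((‖gramSchmidt ℝ v k‖ ^ 2)⁻¹ * ⟪gramSchmidt ℝ v k, v j⟫) • gramSchmidt ℝ v k := by
  set g := gramSchmidt ℝ v with hg
  set w := ∑ k, ((‖g k‖ ^ 2)⁻¹ * ⟪g k, v j⟫) • g k with hw
  have horth : ∀ m, ⟪g m, v j - w⟫ = 0 := by
    intro m
    rw [inner_sub_right, hw, inner_sum]
    rw [Finset.sum_eq_single m]
    · rw [real_inner_smul_right, real_inner_self_eq_norm_sq]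
      by_cases h : g m = 0
      · simp [h]
      · have h2 : (‖g m‖ : ℝ) ^ 2 ≠ 0 := pow_ne_zero 2 (norm_ne_zero_iff.2 h)
        field_simp
        ring
    · intro k _ hk
      rw [real_inner_smul_right, gramSchmidt_orthogonal ℝ v hk.symm, mul_zero]
    · intro h; exact absurd (Finset.mem_univ m) h
  have hmem : v j - w ∈ Submodule.span ℝ (Set.range g) := by
    apply Submodule.sub_mem
    · exact Submodule.span_mono (Set.image_subset_range _ _)
        (mem_span_gramSchmidt ℝ v (le_refl j))
    · exact Submodule.sum_mem _ fun k _ => Submodule.smul_mem _ _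
        (Submodule.subset_span ⟨k, rfl⟩)
  obtain ⟨c, hc⟩ := (mem_span_range_iff_exists_fun ℝ).1 hmem
  have hz : ⟪v j - w, v j - w⟫ = 0 := by
    rw [← hc, sum_inner]
    exact Finset.sum_eq_zero fun k _ => by
      rw [real_inner_smul_left, hc, horth k, mul_zero]
  have := inner_self_eq_zero.1 hz
  rw [sub_eq_zero] at this
  exact this

open Matrix
/-- orbit decomposition of the closed cone.
A real symmetric matrix `X` is positive semidefinite if and only if it can be written as
`X = T · diag(ψ) · Tᵀ` with `T` lower triangular with strictly positive diagonal entries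
and `ψ ∈ {0,1}^r`. -/
theorem posSemidef_iff_exists_triangular_diag (r : ℕ) (hr : 1 ≤ r)
    (X : Matrix (Fin r) (Fin r) ℝ) (hX : X.IsSymm) :
    X.PosSemidef ↔
      ∃ (T : Matrix (Fin r) (Fin r) ℝ) (ψ : Fin r → Bool),
        (∀ i j : Fin r, i < j → T i j = 0) ∧ (∀ i : Fin r, 0 < T i i) ∧
        X = T * Matrix.diagonal (fun j => if ψ j then (1 : ℝ) else 0) * Tᵀ := by
  haveI : WellFoundedLT (Fin r) := inferInstance
  classical
  constructor
  · intro hpsd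
    obtain ⟨B, hB⟩ : ∃ B : Matrix (Fin r) (Fin r) ℝ, X = Bᴴ * B := by
      open scoped MatrixOrder Matrix.Norms.L2Operator in
      exact CStarAlgebra.nonneg_iff_eq_star_mul_self.mp hpsd.nonneg
    set v : Fin r → EuclideanSpace ℝ (Fin r) := fun i => WithLp.toLp 2 (fun k => B k i) with hv
    set g : Fin r → EuclideanSpace ℝ (Fin r) := gramSchmidt ℝ v with hg
    have hXij : ∀ i j, X i j = ⟪v i, v j⟫ := by
      intro i j
      rw [hB]
      simp [Matrix.mul_apply, PiLp.inner_apply, RCLike.inner_apply, hv, starRingEnd_apply, mul_comm]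
    refine ⟨Matrix.of fun i k =>
        if g k = 0 then (if i = k then (1 : ℝ) else 0) else ‖g k‖⁻¹ * ⟪g k, v i⟫,
      fun k => if g k = 0 then false else true, ?_, ?_, ?_⟩
    · intro i j hij
      by_cases h : g j = 0
      · simp [h, hij.ne]
      · simp only [Matrix.of_apply, h, if_false]
        rw [gramSchmidt_inv_triangular ℝ v hij, mul_zero]
    · intro i
      by_cases h : g i = 0
      · simp [h]
      · simp only [Matrix.of_apply, h, if_false]
        rw [hg, inner_self_gramSchmidt' v i]
        have hn : (0 : ℝ) < ‖g i‖ := norm_pos_iff.2 h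
        rw [pow_two]
        calc (0:ℝ) < ‖g i‖ := hn
        _ = ‖g i‖⁻¹ * (‖g i‖ * ‖g i‖) := by field_simp
    · ext i j
      rw [Matrix.mul_apply]
      have hparse := parseval_gs' v j
      rw [← hg] at hparse
      have : X i j = ∑ k, ((‖g k‖ ^ 2)⁻¹ * ⟪g k, v j⟫) * ⟪v i, g k⟫ := by
        rw [hXij i j]
        conv_lhs => rw [hparse]
        rw [inner_sum]
        exact Finset.sum_congr rfl fun k _ => by rw [real_inner_smul_right]
      rw [this]
      refine Finset.sum_congr rfl fun k _ => ?_
      by_cases h : g k = 0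
      · simp [h, Matrix.mul_apply, Matrix.diagonal_apply]
      · have h2 : (‖g k‖ : ℝ) ≠ 0 := norm_ne_zero_iff.2 h
        simp only [Matrix.mul_diagonal, Matrix.transpose_apply, Matrix.of_apply, h, if_false,
          Bool.false_eq_true, if_true]
        rw [real_inner_comm (v i) (g k), pow_two, mul_inv]
        ring
  · rintro ⟨T, ψ, _, _, rfl⟩
    have hd : Matrix.PosSemidef (Matrix.diagonal (fun j => if ψ j then (1 : ℝ) else 0)) := by
      refine Matrix.posSemidef_diagonal_iff.mpr fun i => ?_
      split <;> norm_num
    have := hd.mul_mul_conjTranspose_same T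
    rwa [Matrix.conjTranspose_eq_transpose_of_trivial] at this
end

section
/- Let r ≥ 1, s ∈ ℝ^r, T ∈ T_r⁺, and let X be an r×r real symmetric positive definite matrix. Then T X Tᵀ and T Tᵀ are positive definite and Δ_s(T X Tᵀ) = Δ_s(T Tᵀ) · Δ_s(X). -/
open Matrix

/-- The leading principal minor of order `k`: the determinant of the top-left `k × k`
submatrix (equal to `1` for `k = 0`, and junk value `0` for `k > r`). -/
noncomputable def leadingMinor {r : ℕ} (X : Matrix (Fin r) (Fin r) ℝ) (k : ℕ) : ℝ :=
  if h : k ≤ r then (X.submatrix (Fin.castLE h) (Fin.castLE h)).det else 0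

/-- The generalized power `Δ_s(Y) = ∏_{k=1}^r (m_k(Y)/m_{k-1}(Y))^{s_k}`. -/
noncomputable def gpow {r : ℕ} (s : Fin r → ℝ) (Y : Matrix (Fin r) (Fin r) ℝ) : ℝ :=
  ∏ k : Fin r, (leadingMinor Y ((k : ℕ) + 1) / leadingMinor Y (k : ℕ)) ^ s k

lemma leadingMinor_eq {r : ℕ} (Y : Matrix (Fin r) (Fin r) ℝ) {k : ℕ} (h : k ≤ r) :
    leadingMinor Y k = (Y.submatrix (Fin.castLE h) (Fin.castLE h)).det := dif_pos h

lemma sum_castLE {M : Type*} [AddCommMonoid M] {r k : ℕ} (h : k ≤ r) (f : Fin r → M)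
    (hf : ∀ a : Fin r, k ≤ (a : ℕ) → f a = 0) :
    ∑ a : Fin r, f a = ∑ a : Fin k, f (Fin.castLE h a) := by
  rw [Finset.sum_fin_eq_sum_range, Finset.sum_fin_eq_sum_range]
  rw [← Finset.sum_subset (Finset.range_subset_range.mpr h)]
  · apply Finset.sum_congr rfl
    intro i hi
    rw [Finset.mem_range] at hi
    rw [dif_pos hi, dif_pos (lt_of_lt_of_le hi h)]
    rfl
  · intro i hi hni
    rw [Finset.mem_range] at hi hni
    rw [dif_pos hi]
    exact hf ⟨i, hi⟩ (Nat.le_of_not_lt hni)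

/-- The top-left block of `T X Tᵀ` for lower-triangular `T`. -/
lemma submatrix_triple {r k : ℕ} (h : k ≤ r) (T X : Matrix (Fin r) (Fin r) ℝ)
    (hT : ∀ i j : Fin r, i < j → T i j = 0) :
    (T * X * Tᵀ).submatrix (Fin.castLE h) (Fin.castLE h) =
      (T.submatrix (Fin.castLE h) (Fin.castLE h)) *
        (X.submatrix (Fin.castLE h) (Fin.castLE h)) *
        (T.submatrix (Fin.castLE h) (Fin.castLE h))ᵀ := by
  ext i j
  simp only [submatrix_apply, mul_apply, transpose_apply]
  rw [sum_castLE h (fun a => (∑ b, T (Fin.castLE h i) b * X b a) * T (Fin.castLE h j) a)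
    (fun a ha => by
      have hz : T (Fin.castLE h j) a = 0 :=
        hT _ _ (show ((Fin.castLE h j : Fin r) : ℕ) < (a : ℕ) from lt_of_lt_of_le j.isLt ha)
      simp [hz])]
  refine Finset.sum_congr rfl fun a _ => ?_
  congr 1
  exact sum_castLE h (fun b => T (Fin.castLE h i) b * X b (Fin.castLE h a))
    (fun b hb => by
      have hz : T (Fin.castLE h i) b = 0 :=
        hT _ _ (show ((Fin.castLE h i : Fin r) : ℕ) < (b : ℕ) from lt_of_lt_of_le i.isLt hb)
      simp [hz])

lemma posDef_submatrix_castLE {r k : ℕ} (h : k ≤ r) {X : Matrix (Fin r) (Fin r) ℝ}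
    (hX : X.PosDef) : (X.submatrix (Fin.castLE h) (Fin.castLE h)).PosDef := by
  refine posDef_iff_dotProduct_mulVec.mpr ⟨hX.1.submatrix _, fun x hx => ?_⟩
  classical
  let y : Fin r → ℝ := fun j => if hj : (j : ℕ) < k then x ⟨j, hj⟩ else 0
  have hyc : ∀ a : Fin k, y (Fin.castLE h a) = x a := by
    intro a
    show (if hj : ((Fin.castLE h a : Fin r) : ℕ) < k then x ⟨_, hj⟩ else 0) = x a
    rw [dif_pos (show ((Fin.castLE h a : Fin r) : ℕ) < k from a.isLt)]
    exact congrArg x (Fin.ext rfl)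
  have hyz : ∀ a : Fin r, k ≤ (a : ℕ) → y a = 0 := by
    intro a ha
    show (if hj : (a : ℕ) < k then x ⟨_, hj⟩ else 0) = 0
    rw [dif_neg (Nat.not_lt.mpr ha)]
  have hy0 : y ≠ 0 := by
    obtain ⟨i, hi⟩ := Function.ne_iff.mp hx
    intro hcon
    apply hi
    have h2 := congrFun hcon (Fin.castLE h i)
    rwa [hyc i, Pi.zero_apply] at h2
  have key := hX.dotProduct_mulVec_pos hy0
  have he : star y ⬝ᵥ X *ᵥ y =
      star x ⬝ᵥ (X.submatrix (Fin.castLE h) (Fin.castLE h)) *ᵥ x := by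
    simp only [star_trivial, dotProduct, mulVec, dotProduct]
    rw [sum_castLE h (fun a => y a * ∑ b, X a b * y b)
      (fun a ha => by simp [hyz a ha])]
    refine Finset.sum_congr rfl fun a _ => ?_
    rw [hyc a]
    congr 1
    rw [sum_castLE h (fun b => X (Fin.castLE h a) b * y b)
      (fun b hb => by simp [hyz b hb])]
    refine Finset.sum_congr rfl fun b _ => ?_
    rw [hyc b, submatrix_apply]
  rw [← he]
  exact key

lemma det_submatrix_tri {r k : ℕ} (h : k ≤ r) (T : Matrix (Fin r) (Fin r) ℝ)
    (hT : ∀ i j : Fin r, i < j → T i j = 0) :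
    (T.submatrix (Fin.castLE h) (Fin.castLE h)).det =
      ∏ i : Fin k, T (Fin.castLE h i) (Fin.castLE h i) := by
  rw [Matrix.det_of_lowerTriangular _ (fun i j hij => ?_)]
  · rfl
  · refine hT _ _ ?_
    have : i < j := OrderDual.toDual_lt_toDual.mp hij
    exact (show ((Fin.castLE h i : Fin r) : ℕ) < ((Fin.castLE h j : Fin r) : ℕ) from this)

/-- For `T` lower triangular with positive diagonal and `X` symmetric
positive definite, `T X Tᵀ` and `T Tᵀ` are positive definite and
`Δ_s(T X Tᵀ) = Δ_s(T Tᵀ) · Δ_s(X)`. -/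
theorem gpow_triangular_congruence (r : ℕ) (hr : 1 ≤ r) (s : Fin r → ℝ)
    (T X : Matrix (Fin r) (Fin r) ℝ)
    (hT : ∀ i j : Fin r, i < j → T i j = 0) (hTd : ∀ i : Fin r, 0 < T i i)
    (hX : X.PosDef) :
    (T * X * Tᵀ).PosDef ∧ (T * Tᵀ).PosDef ∧
      gpow s (T * X * Tᵀ) = gpow s (T * Tᵀ) * gpow s X := by
  have hdetT : T.det = ∏ i, T i i :=
    Matrix.det_of_lowerTriangular T
      (fun i j hij => hT _ _ (OrderDual.toDual_lt_toDual.mp hij))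
  have hdetT_pos : 0 < T.det := hdetT ▸ Finset.prod_pos (fun i _ => hTd i)
  have hdetTt : IsUnit Tᵀ.det := by
    rw [Matrix.det_transpose]; exact isUnit_iff_ne_zero.mpr hdetT_pos.ne'
  -- general positive definiteness of T Y Tᵀ
  have hPD : ∀ Y : Matrix (Fin r) (Fin r) ℝ, Y.PosDef → (T * Y * Tᵀ).PosDef := by
    intro Y hY
    have hYsymm : Yᵀ = Y := by
      ext i j
      have := congrFun (congrFun hY.1 i) j
      simpa using this
    refine posDef_iff_dotProduct_mulVec.mpr ⟨?_, ?_⟩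
    · show (T * Y * Tᵀ)ᴴ = _
      have hconj : ∀ A : Matrix (Fin r) (Fin r) ℝ, Aᴴ = Aᵀ := fun A => by
        ext i j; simp [conjTranspose_apply]
      rw [hconj, Matrix.transpose_mul, Matrix.transpose_mul, Matrix.transpose_transpose,
        hYsymm, ← Matrix.mul_assoc]
    · intro x hx
      have hy0 : Tᵀ *ᵥ x ≠ 0 := by
        intro hcon
        apply hx
        have : (Tᵀ)⁻¹ *ᵥ (Tᵀ *ᵥ x) = (Tᵀ)⁻¹ *ᵥ 0 := by rw [hcon]
        rwa [Matrix.mulVec_mulVec, Matrix.nonsing_inv_mul _ hdetTt, Matrix.one_mulVec,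
          Matrix.mulVec_zero] at this
      have key := hY.dotProduct_mulVec_pos hy0
      simp only [star_trivial] at key ⊢
      rwa [← Matrix.mulVec_mulVec, ← Matrix.mulVec_mulVec, Matrix.dotProduct_mulVec,
        ← Matrix.mulVec_transpose]
  have hPD1 : (T * Tᵀ).PosDef := by
    have := hPD 1 Matrix.PosDef.one
    rwa [mul_one] at this
  refine ⟨hPD X hX, hPD1, ?_⟩
  -- minors
  have hsub1 : ∀ {k : ℕ} (h : k ≤ r),
      (1 : Matrix (Fin r) (Fin r) ℝ).submatrix (Fin.castLE h) (Fin.castLE h) = 1 := by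
    intro k h
    ext i j
    by_cases hij : i = j
    · subst hij; simp [Matrix.one_apply]
    · rw [submatrix_apply, Matrix.one_apply_ne (fun hc => hij (Fin.castLE_injective h hc)),
        Matrix.one_apply_ne hij]
  have hminor : ∀ (Y : Matrix (Fin r) (Fin r) ℝ) {k : ℕ} (h : k ≤ r),
      leadingMinor (T * Y * Tᵀ) k =
        (T.submatrix (Fin.castLE h) (Fin.castLE h)).det ^ 2 * leadingMinor Y k := by
    intro Y k h
    rw [leadingMinor_eq _ h, leadingMinor_eq _ h, submatrix_triple h T Y hT,
      Matrix.det_mul, Matrix.det_mul, Matrix.det_transpose]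
    ring
  have hminor1 : ∀ {k : ℕ} (h : k ≤ r),
      leadingMinor (T * Tᵀ) k = (T.submatrix (Fin.castLE h) (Fin.castLE h)).det ^ 2 := by
    intro k h
    have h2 := hminor 1 h
    rw [mul_one] at h2
    rw [h2, leadingMinor_eq _ h, hsub1 h, Matrix.det_one, mul_one]
  -- the product
  unfold gpow
  rw [← Finset.prod_mul_distrib]
  refine Finset.prod_congr rfl fun k _ => ?_
  have hk1 : (k : ℕ) + 1 ≤ r := k.isLt
  have hk : (k : ℕ) ≤ r := le_of_lt k.isLt
  have hX1 : 0 < leadingMinor X ((k : ℕ) + 1) := by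
    rw [leadingMinor_eq _ hk1]; exact (posDef_submatrix_castLE hk1 hX).det_pos
  have hX0 : 0 < leadingMinor X (k : ℕ) := by
    rw [leadingMinor_eq _ hk]; exact (posDef_submatrix_castLE hk hX).det_pos
  rw [hminor X hk1, hminor X hk, hminor1 hk1, hminor1 hk]
  rw [← div_mul_div_comm]
  rw [← Real.mul_rpow (div_nonneg (sq_nonneg _) (sq_nonneg _)) (div_nonneg hX1.le hX0.le)]
end

section
/- Let r ≥ 1. The function θ ↦ log det θ, defined on the open subset of positive definite matrices of the real vector space Sym_r, is twice Fréchet differentiable; at every positive definite θ its first derivative is the linear map K ↦ tr(θ⁻¹ K) on Sym_r, and its second derivative is the bilinear map (K, L) ↦ −tr(θ⁻¹ K θ⁻¹ L) on Sym_r × Sym_r. -/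
open Matrix

/-- Coordinates on the real vector space `Sym_r` of symmetric `r × r` matrices:
the on-and-above-diagonal positions. -/
abbrev SymIdx (r : ℕ) := {p : Fin r × Fin r // p.1 ≤ p.2}

/-- The symmetric matrix with the given on-and-above-diagonal coordinates. -/
def symOf {r : ℕ} (x : SymIdx r → ℝ) : Matrix (Fin r) (Fin r) ℝ :=
  Matrix.of fun i j =>
    if h : i ≤ j then x ⟨(i, j), h⟩ else x ⟨(j, i), (le_total i j).resolve_left h⟩

lemma symOf_add {r : ℕ} (x y : SymIdx r → ℝ) : symOf (x + y) = symOf x + symOf y := by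
  ext i j; by_cases h : i ≤ j <;> simp [symOf, h]

lemma symOf_smul {r : ℕ} (c : ℝ) (x : SymIdx r → ℝ) : symOf (c • x) = c • symOf x := by
  ext i j; by_cases h : i ≤ j <;> simp [symOf, h]

/-- The linear form `K ↦ tr(M K)` on `Sym_r` (in coordinates). -/
noncomputable def trForm {r : ℕ} (M : Matrix (Fin r) (Fin r) ℝ) :
    (SymIdx r → ℝ) →ₗ[ℝ] ℝ where
  toFun K := (M * symOf K).trace
  map_add' x y := by simp [symOf_add, Matrix.mul_add]
  map_smul' c x := by simp [symOf_smul, Matrix.mul_smul]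

/-- The linear form `K ↦ tr(M K)` on `Sym_r`, as a continuous linear map. -/
noncomputable def trCLM {r : ℕ} (M : Matrix (Fin r) (Fin r) ℝ) :
    (SymIdx r → ℝ) →L[ℝ] ℝ := LinearMap.toContinuousLinearMap (trForm M)

/-- The bilinear form `(K, L) ↦ −tr(M K M L)` on `Sym_r`. -/
noncomputable def negTrBForm {r : ℕ} (M : Matrix (Fin r) (Fin r) ℝ) :
    (SymIdx r → ℝ) →ₗ[ℝ] (SymIdx r → ℝ) →ₗ[ℝ] ℝ :=
  LinearMap.mk₂ ℝ (fun K L => -(M * symOf K * M * symOf L).trace)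
    (fun K K' L => by simp [symOf_add, Matrix.add_mul, Matrix.mul_add]; ring)
    (fun c K L => by simp [symOf_smul, Matrix.smul_mul, Matrix.mul_smul])
    (fun K L L' => by simp [symOf_add, Matrix.mul_add]; ring)
    (fun c K L => by simp [symOf_smul, Matrix.mul_smul])

/-- The bilinear form `(K, L) ↦ −tr(M K M L)` on `Sym_r`, as a continuous bilinear map. -/
noncomputable def negTrBCLM {r : ℕ} (M : Matrix (Fin r) (Fin r) ℝ) :
    (SymIdx r → ℝ) →L[ℝ] (SymIdx r → ℝ) →L[ℝ] ℝ :=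
  LinearMap.toContinuousLinearMap
    ((LinearMap.toContinuousLinearMap (E := SymIdx r → ℝ) (F' := ℝ)).toLinearMap ∘ₗ
      negTrBForm M)

noncomputable def detCM (r : ℕ) : ContinuousMultilinearMap ℝ (fun _ : Fin r => Fin r → ℝ) ℝ :=
  { (Matrix.detRowAlternating : (Fin r → ℝ) [⋀^Fin r]→ₗ[ℝ] ℝ).toMultilinearMap with
    cont := by
      exact Continuous.matrix_det (continuous_id (X := Fin r → Fin r → ℝ)) }

lemma det_updateRow_eq {r : ℕ} (A : Matrix (Fin r) (Fin r) ℝ) (i : Fin r) (b : Fin r → ℝ) :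
    (A.updateRow i b).det = ∑ j, b j * adjugate A j i := by
  let l : (Fin r → ℝ) →ₗ[ℝ] ℝ :=
    { toFun := fun b => (A.updateRow i b).det
      map_add' := fun u v => Matrix.det_updateRow_add A i u v
      map_smul' := fun c u => Matrix.det_updateRow_smul A i c u }
  have hb : b = ∑ j, b j • (Pi.single j 1 : Fin r → ℝ) := by
    simp_rw [← Pi.single_smul, smul_eq_mul, mul_one]
    exact (Finset.univ_sum_single b).symm
  calc (A.updateRow i b).det = l b := rfl
    _ = ∑ j, b j * l (Pi.single j 1) := by
        conv_lhs => rw [hb]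
        rw [map_sum]
        simp [l]
    _ = ∑ j, b j * adjugate A j i := by
        simp [l, ← Matrix.adjugate_apply]

/-- symOf as a linear map into the pi type of rows. -/
def symL (r : ℕ) : (SymIdx r → ℝ) →ₗ[ℝ] (Fin r → Fin r → ℝ) where
  toFun X := Matrix.of.symm (symOf X)
  map_add' x y := by rw [symOf_add]; rfl
  map_smul' c x := by rw [symOf_smul]; rfl

noncomputable def symCLM (r : ℕ) : (SymIdx r → ℝ) →L[ℝ] (Fin r → Fin r → ℝ) :=
  LinearMap.toContinuousLinearMap (symL r)

theorem first_deriv {r : ℕ} (θ : SymIdx r → ℝ) (hθ : (symOf θ).PosDef) :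
    HasFDerivAt (fun X : SymIdx r → ℝ => Real.log (symOf X).det)
      (trCLM (symOf θ)⁻¹) θ := by
  set A := symOf θ with hA
  have hdet : A.det ≠ 0 := ne_of_gt hθ.det_pos
  have h0 : HasFDerivAt (detCM r) ((detCM r).linearDeriv (symCLM r θ)) (symCLM r θ) :=
    (detCM r).hasFDerivAt _
  have h1 : HasFDerivAt (fun X : SymIdx r → ℝ => (symOf X).det)
      (((detCM r).linearDeriv (symCLM r θ)).comp (symCLM r)) θ :=
    h0.comp θ (symCLM r).hasFDerivAt
  have h2 := h1.log hdet
  have heq : (symOf θ).det⁻¹ • (((detCM r).linearDeriv (symCLM r θ)).comp (symCLM r))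
      = trCLM (A⁻¹) := by
    ext K
    simp only [ContinuousLinearMap.smul_apply, ContinuousLinearMap.coe_comp',
      Function.comp_apply, ContinuousMultilinearMap.linearDeriv_apply, smul_eq_mul]
    have hup : ∀ i : Fin r, (detCM r) (Function.update (symCLM r θ) i (symCLM r K i))
        = (A.updateRow i (symOf K i)).det := fun i => rfl
    simp only [hup]
    have hsum : ∑ i, (A.updateRow i (symOf K i)).det = (A⁻¹ * symOf K).trace * A.det := by
      simp_rw [det_updateRow_eq]
      rw [Matrix.inv_def, Ring.inverse_eq_inv']
      simp only [Matrix.smul_mul, Matrix.trace_smul, smul_eq_mul]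
      rw [Matrix.trace]
      simp only [Matrix.diag_apply, Matrix.mul_apply]
      rw [mul_comm, ← mul_assoc, mul_inv_cancel₀ hdet, one_mul]
      exact (Finset.sum_comm.trans
        (Finset.sum_congr rfl fun y _ => Finset.sum_congr rfl fun x _ => mul_comm _ _)).symm
    rw [hsum, trCLM]
    simp only [LinearMap.coe_toContinuousLinearMap']
    rw [trForm]
    field_simp
    exact mul_div_cancel_right₀ _ hdet
  rw [← heq]
  exact h2

section second

attribute [local instance] Matrix.linftyOpNormedAddCommGroup Matrix.linftyOpNormedSpace
  Matrix.linftyOpNormedRing Matrix.linftyOpNormedAlgebra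

def symM (r : ℕ) : (SymIdx r → ℝ) →ₗ[ℝ] Matrix (Fin r) (Fin r) ℝ where
  toFun := symOf
  map_add' := symOf_add
  map_smul' := symOf_smul

noncomputable def symMCLM (r : ℕ) : (SymIdx r → ℝ) →L[ℝ] Matrix (Fin r) (Fin r) ℝ :=
  LinearMap.toContinuousLinearMap (symM r)

noncomputable def trL (r : ℕ) : Matrix (Fin r) (Fin r) ℝ →ₗ[ℝ] ((SymIdx r → ℝ) →L[ℝ] ℝ) where
  toFun M := trCLM M
  map_add' M N := by ext K; simp [trCLM, trForm, Matrix.add_mul]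
  map_smul' c M := by ext K; simp [trCLM, trForm, Matrix.smul_mul]

noncomputable def trPhi (r : ℕ) : Matrix (Fin r) (Fin r) ℝ →L[ℝ] ((SymIdx r → ℝ) →L[ℝ] ℝ) :=
  LinearMap.toContinuousLinearMap (trL r)

theorem second_deriv {r : ℕ} (θ : SymIdx r → ℝ) (hθ : (symOf θ).PosDef) :
    HasFDerivAt (fun X : SymIdx r → ℝ => trCLM (symOf X)⁻¹)
      (negTrBCLM (symOf θ)⁻¹) θ := by
  set A := symOf θ with hA
  have hdet : IsUnit A.det := (ne_of_gt hθ.det_pos).isUnit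
  obtain ⟨u, hu⟩ := (Matrix.isUnit_iff_isUnit_det A).mpr hdet
  have hinv0 : HasFDerivAt Ring.inverse
      (-ContinuousLinearMap.mulLeftRight ℝ _ ↑u⁻¹ ↑u⁻¹) (u : Matrix (Fin r) (Fin r) ℝ) :=
    hasFDerivAt_ringInverse u
  have huinv : (↑u⁻¹ : Matrix (Fin r) (Fin r) ℝ) = A⁻¹ := by
    rw [Matrix.nonsing_inv_eq_ringInverse, ← hu, Ring.inverse_unit]
  have hfun : (Ring.inverse : Matrix (Fin r) (Fin r) ℝ → _)
      = (Inv.inv : Matrix (Fin r) (Fin r) ℝ → _) := by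
    funext M; rw [Matrix.nonsing_inv_eq_ringInverse]
  rw [hu, huinv, hfun] at hinv0
  have hg : HasFDerivAt (fun X : SymIdx r → ℝ => (symOf X)⁻¹)
      ((-ContinuousLinearMap.mulLeftRight ℝ _ A⁻¹ A⁻¹).comp (symMCLM r)) θ :=
    hinv0.comp θ (symMCLM r).hasFDerivAt
  have hF : HasFDerivAt (fun X : SymIdx r → ℝ => trCLM (symOf X)⁻¹)
      ((trPhi r).comp ((-ContinuousLinearMap.mulLeftRight ℝ _ A⁻¹ A⁻¹).comp (symMCLM r))) θ :=
    ((trPhi r).hasFDerivAt).comp θ hg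
  have heq : (trPhi r).comp ((-ContinuousLinearMap.mulLeftRight ℝ _ A⁻¹ A⁻¹).comp (symMCLM r))
      = negTrBCLM (A⁻¹) := by
    ext K L
    change (-(A⁻¹ * symOf K * A⁻¹) * symOf L).trace = -(A⁻¹ * symOf K * A⁻¹ * symOf L).trace
    simp [trPhi, trL, trCLM, trForm, symMCLM, symM, negTrBCLM, negTrBForm,
      ContinuousLinearMap.mulLeftRight_apply, Matrix.neg_mul, Matrix.mul_assoc]
  rw [← heq]
  exact hF

end second

/-- On the open set of positive definite matrices in `Sym_r`
(realized via on-and-above-diagonal coordinates), the map `θ ↦ log det θ` is twice Fréchet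
differentiable: at every positive definite `θ` its first derivative is the linear map
`K ↦ tr(θ⁻¹ K)` and its second derivative is the bilinear map
`(K, L) ↦ −tr(θ⁻¹ K θ⁻¹ L)`. -/
theorem hasFDerivAt_log_det (r : ℕ) (hr : 1 ≤ r) :
    ∀ θ : SymIdx r → ℝ, (symOf θ).PosDef →
      HasFDerivAt (fun X : SymIdx r → ℝ => Real.log (symOf X).det)
        (trCLM (symOf θ)⁻¹) θ ∧
      HasFDerivAt (fun X : SymIdx r → ℝ => trCLM (symOf X)⁻¹)
        (negTrBCLM (symOf θ)⁻¹) θ := by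
  intro θ hθ
  exact ⟨first_deriv θ hθ, second_deriv θ hθ⟩
end
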